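/- Let $Y = \{y_1, \ldots, y_m\}$, $m \ge 2$, be a finite real sequence such that both $(y_k)$ and $(\Delta y_k)$ are monotonic. Then $D(Y) \le 2\left(\max_k |\Delta y_k| + \frac{\max_{j \in \mathbb{Z}} \#\{k : y_k \in [j, j+1)\}}{m}\right)$. -/

import Mathlib

private lemma telescope (f : ℕ → ℝ) {r s : ℕ} (h : r ≤ s) :
    ∑ k ∈ Finset.Ico r s, (f (k + 1) - f k) = f s - f r := by
  induction s, h using Nat.le_induction with
  | base => simp
  | succ n hn ih => rw [Finset.sum_Ico_succ_top hn, ih]; ring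

private lemma blockAfter (m : ℕ) (y : ℕ → ℝ)
    (hy : MonotoneOn y (Set.Icc 1 m))
    (hΔ : MonotoneOn (fun k => y (k + 1) - y k) (Set.Icc 1 (m - 1)))
    (e f c d : ℝ) (hef : e < f) (hfc : f ≤ c) (hcd : c ≤ d)
    (h1 : ∃ k ∈ Finset.Icc 1 m, y k < e) (h2 : ∃ k ∈ Finset.Icc 1 m, f ≤ y k) :
    (f - e) * ((((Finset.Icc 1 m).filter fun k => y k ∈ Set.Ico c d).card : ℝ) - 1)
      ≤ (d - c) * ((((Finset.Icc 1 m).filter fun k => y k ∈ Set.Ico e f).card : ℝ) + 1) := by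
  set F := (Finset.Icc 1 m).filter (fun k => y k ∈ Set.Ico c d) with hF
  set Ne' := (Finset.Icc 1 m).filter (fun k => y k ∈ Set.Ico e f) with hNe'
  by_cases hFc : F.card ≤ 1
  · have h1' : (F.card : ℝ) - 1 ≤ 0 := by
      have : (F.card : ℝ) ≤ 1 := by exact_mod_cast hFc
      linarith
    have := mul_nonpos_of_nonneg_of_nonpos (le_of_lt (by linarith : (0:ℝ) < f - e)) h1'
    have h2' : (0:ℝ) ≤ (d - c) * ((Ne'.card : ℝ) + 1) :=
      mul_nonneg (by linarith) (by positivity)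
    linarith
  push_neg at hFc
  have hFne : F.Nonempty := Finset.card_pos.mp (by omega)
  set p := F.min' hFne with hp
  set q := F.max' hFne with hq
  have hpF : p ∈ F := F.min'_mem hFne
  have hqF : q ∈ F := F.max'_mem hFne
  have hmemF : ∀ k ∈ F, (1 ≤ k ∧ k ≤ m) ∧ c ≤ y k ∧ y k < d := by
    intro k hk
    simpa [hF, Finset.mem_filter, Finset.mem_Icc, Set.mem_Ico] using hk
  obtain ⟨⟨hp1, hpm⟩, hpc, hpd⟩ := hmemF p hpF
  obtain ⟨⟨hq1, hqm⟩, hqc, hqd⟩ := hmemF q hqF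
  have hpq : p ≤ q := F.min'_le q hqF
  -- F is an interval of indices
  have hFeq : F = Finset.Icc p q := by
    apply Finset.Subset.antisymm
    · intro k hk
      exact Finset.mem_Icc.mpr ⟨F.min'_le k hk, F.le_max' k hk⟩
    · intro k hk
      rw [Finset.mem_Icc] at hk
      have hk1 : 1 ≤ k := le_trans hp1 hk.1
      have hkm : k ≤ m := le_trans hk.2 hqm
      have hl : y p ≤ y k := hy (Set.mem_Icc.mpr ⟨hp1, hpm⟩) (Set.mem_Icc.mpr ⟨hk1, hkm⟩) hk.1
      have hr : y k ≤ y q := hy (Set.mem_Icc.mpr ⟨hk1, hkm⟩) (Set.mem_Icc.mpr ⟨hq1, hqm⟩) hk.2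
      rw [hF, Finset.mem_filter, Finset.mem_Icc]
      exact ⟨⟨hk1, hkm⟩, Set.mem_Ico.mpr ⟨le_trans hpc hl, lt_of_le_of_lt hr hqd⟩⟩
  have hcardF : F.card = q - p + 1 := by rw [hFeq, Nat.card_Icc]; omega
  -- r and s
  obtain ⟨k₁, hk₁m, hk₁⟩ := h1
  obtain ⟨k₂, hk₂m, hk₂⟩ := h2
  set R := (Finset.Icc 1 m).filter (fun k => y k < e) with hR
  set S := (Finset.Icc 1 m).filter (fun k => f ≤ y k) with hS
  have hRne : R.Nonempty := ⟨k₁, by rw [hR, Finset.mem_filter]; exact ⟨hk₁m, hk₁⟩⟩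
  have hSne : S.Nonempty := ⟨k₂, by rw [hS, Finset.mem_filter]; exact ⟨hk₂m, hk₂⟩⟩
  set r := R.max' hRne with hr
  set s := S.min' hSne with hs
  have hrR : r ∈ R := R.max'_mem hRne
  have hsS : s ∈ S := S.min'_mem hSne
  have hrmem : (1 ≤ r ∧ r ≤ m) ∧ y r < e := by
    simpa [hR, Finset.mem_filter, Finset.mem_Icc] using hrR
  have hsmem : (1 ≤ s ∧ s ≤ m) ∧ f ≤ y s := by
    simpa [hS, Finset.mem_filter, Finset.mem_Icc] using hsS
  obtain ⟨⟨hr1, hrm⟩, hre⟩ := hrmem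
  obtain ⟨⟨hs1, hsm⟩, hsf⟩ := hsmem
  have hrs : r < s := by
    by_contra h
    push_neg at h
    have : y s ≤ y r := hy (Set.mem_Icc.mpr ⟨hs1, hsm⟩) (Set.mem_Icc.mpr ⟨hr1, hrm⟩) h
    linarith
  -- points strictly between r and s are in [e, f)
  have hIoo : Finset.Ioo r s ⊆ Ne' := by
    intro k hk
    rw [Finset.mem_Ioo] at hk
    have hk1 : 1 ≤ k := by omega
    have hkm : k ≤ m := by omega
    have hke : e ≤ y k := by
      by_contra h
      push_neg at h
      have : k ≤ r := R.le_max' k (by rw [hR, Finset.mem_filter, Finset.mem_Icc]; exact ⟨⟨hk1, hkm⟩, h⟩)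
      omega
    have hkf : y k < f := by
      by_contra h
      push_neg at h
      have : s ≤ k := S.min'_le k (by rw [hS, Finset.mem_filter, Finset.mem_Icc]; exact ⟨⟨hk1, hkm⟩, h⟩)
      omega
    rw [hNe', Finset.mem_filter, Finset.mem_Icc]
    exact ⟨⟨hk1, hkm⟩, Set.mem_Ico.mpr ⟨hke, hkf⟩⟩
  have hNecard : s - r - 1 ≤ Ne'.card := by
    have := Finset.card_le_card hIoo
    rwa [Nat.card_Ioo] at this
  -- the block comes after the crossing
  have hsp : s ≤ p := S.min'_le p (by rw [hS, Finset.mem_filter, Finset.mem_Icc]; exact ⟨⟨hp1, hpm⟩, le_trans hfc hpc⟩)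
  -- telescoping sums
  have hs1' : s - 1 + 1 = s := by omega
  set g : ℝ := y s - y (s - 1) with hg
  have hT1 : y s - y r ≤ ((s - r : ℕ) : ℝ) * g := by
    have := telescope y (le_of_lt hrs)
    rw [← this]
    have hle : ∀ k ∈ Finset.Ico r s, y (k + 1) - y k ≤ g := by
      intro k hk
      rw [Finset.mem_Ico] at hk
      have h1k : (1:ℕ) ≤ k := by omega
      have hkm1 : k ≤ m - 1 := by omega
      have := hΔ (Set.mem_Icc.mpr ⟨h1k, hkm1⟩) (Set.mem_Icc.mpr ⟨(by omega : (1:ℕ) ≤ s - 1), by omega⟩) (by omega : k ≤ s - 1)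
      simpa [hg, hs1'] using this
    calc ∑ k ∈ Finset.Ico r s, (y (k + 1) - y k) ≤ ∑ _k ∈ Finset.Ico r s, g :=
          Finset.sum_le_sum hle
      _ = ((s - r : ℕ) : ℝ) * g := by rw [Finset.sum_const, Nat.card_Ico, nsmul_eq_mul]
  have hT2 : ((q - p : ℕ) : ℝ) * g ≤ y q - y p := by
    have := telescope y hpq
    rw [← this]
    have hle : ∀ k ∈ Finset.Ico p q, g ≤ y (k + 1) - y k := by
      intro k hk
      rw [Finset.mem_Ico] at hk
      have h1k : (1:ℕ) ≤ k := by omega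
      have hkm1 : k ≤ m - 1 := by omega
      have := hΔ (Set.mem_Icc.mpr ⟨(by omega : (1:ℕ) ≤ s - 1), by omega⟩) (Set.mem_Icc.mpr ⟨h1k, hkm1⟩) (by omega : s - 1 ≤ k)
      simpa [hg, hs1'] using this
    calc ((q - p : ℕ) : ℝ) * g = ∑ _k ∈ Finset.Ico p q, g := by
          rw [Finset.sum_const, Nat.card_Ico, nsmul_eq_mul]
      _ ≤ ∑ k ∈ Finset.Ico p q, (y (k + 1) - y k) := Finset.sum_le_sum hle
  -- final chain
  have f1 : f - e ≤ ((s - r : ℕ) : ℝ) * g := le_trans (by linarith) hT1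
  have f2 : ((q - p : ℕ) : ℝ) * g ≤ d - c := le_trans hT2 (by linarith)
  have f3 : ((s - r : ℕ) : ℝ) ≤ (Ne'.card : ℝ) + 1 := by
    have : s - r ≤ Ne'.card + 1 := by omega
    exact_mod_cast this
  have hvF : (F.card : ℝ) - 1 = ((q - p : ℕ) : ℝ) := by
    rw [hcardF]
    push_cast [Nat.cast_sub hpq]
    ring
  rw [hvF]
  calc (f - e) * ((q - p : ℕ) : ℝ)
      ≤ (((s - r : ℕ) : ℝ) * g) * ((q - p : ℕ) : ℝ) :=
        mul_le_mul_of_nonneg_right f1 (Nat.cast_nonneg _)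
    _ = ((s - r : ℕ) : ℝ) * (((q - p : ℕ) : ℝ) * g) := by ring
    _ ≤ ((s - r : ℕ) : ℝ) * (d - c) := mul_le_mul_of_nonneg_left f2 (Nat.cast_nonneg _)
    _ = (d - c) * ((s - r : ℕ) : ℝ) := by ring
    _ ≤ (d - c) * ((Ne'.card : ℝ) + 1) := mul_le_mul_of_nonneg_left f3 (by linarith)

private lemma blockBefore (m : ℕ) (y : ℕ → ℝ)
    (hy : MonotoneOn y (Set.Icc 1 m))
    (hΔ : AntitoneOn (fun k => y (k + 1) - y k) (Set.Icc 1 (m - 1)))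
    (e f c d : ℝ) (hef : e < f) (hde : d ≤ e) (hcd : c ≤ d)
    (h1 : ∃ k ∈ Finset.Icc 1 m, y k < e) (h2 : ∃ k ∈ Finset.Icc 1 m, f ≤ y k) :
    (f - e) * ((((Finset.Icc 1 m).filter fun k => y k ∈ Set.Ico c d).card : ℝ) - 1)
      ≤ (d - c) * ((((Finset.Icc 1 m).filter fun k => y k ∈ Set.Ico e f).card : ℝ) + 1) := by
  set F := (Finset.Icc 1 m).filter (fun k => y k ∈ Set.Ico c d) with hF
  set Ne' := (Finset.Icc 1 m).filter (fun k => y k ∈ Set.Ico e f) with hNe'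
  by_cases hFc : F.card ≤ 1
  · have h1' : (F.card : ℝ) - 1 ≤ 0 := by
      have : (F.card : ℝ) ≤ 1 := by exact_mod_cast hFc
      linarith
    have := mul_nonpos_of_nonneg_of_nonpos (le_of_lt (by linarith : (0:ℝ) < f - e)) h1'
    have h2' : (0:ℝ) ≤ (d - c) * ((Ne'.card : ℝ) + 1) :=
      mul_nonneg (by linarith) (by positivity)
    linarith
  push_neg at hFc
  have hFne : F.Nonempty := Finset.card_pos.mp (by omega)
  set p := F.min' hFne with hp
  set q := F.max' hFne with hq
  have hpF : p ∈ F := F.min'_mem hFne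
  have hqF : q ∈ F := F.max'_mem hFne
  have hmemF : ∀ k ∈ F, (1 ≤ k ∧ k ≤ m) ∧ c ≤ y k ∧ y k < d := by
    intro k hk
    simpa [hF, Finset.mem_filter, Finset.mem_Icc, Set.mem_Ico] using hk
  obtain ⟨⟨hp1, hpm⟩, hpc, hpd⟩ := hmemF p hpF
  obtain ⟨⟨hq1, hqm⟩, hqc, hqd⟩ := hmemF q hqF
  have hpq : p ≤ q := F.min'_le q hqF
  have hFeq : F = Finset.Icc p q := by
    apply Finset.Subset.antisymm
    · intro k hk
      exact Finset.mem_Icc.mpr ⟨F.min'_le k hk, F.le_max' k hk⟩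
    · intro k hk
      rw [Finset.mem_Icc] at hk
      have hk1 : 1 ≤ k := le_trans hp1 hk.1
      have hkm : k ≤ m := le_trans hk.2 hqm
      have hl : y p ≤ y k := hy (Set.mem_Icc.mpr ⟨hp1, hpm⟩) (Set.mem_Icc.mpr ⟨hk1, hkm⟩) hk.1
      have hr : y k ≤ y q := hy (Set.mem_Icc.mpr ⟨hk1, hkm⟩) (Set.mem_Icc.mpr ⟨hq1, hqm⟩) hk.2
      rw [hF, Finset.mem_filter, Finset.mem_Icc]
      exact ⟨⟨hk1, hkm⟩, Set.mem_Ico.mpr ⟨le_trans hpc hl, lt_of_le_of_lt hr hqd⟩⟩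
  have hcardF : F.card = q - p + 1 := by rw [hFeq, Nat.card_Icc]; omega
  obtain ⟨k₁, hk₁m, hk₁⟩ := h1
  obtain ⟨k₂, hk₂m, hk₂⟩ := h2
  set R := (Finset.Icc 1 m).filter (fun k => y k < e) with hR
  set S := (Finset.Icc 1 m).filter (fun k => f ≤ y k) with hS
  have hRne : R.Nonempty := ⟨k₁, by rw [hR, Finset.mem_filter]; exact ⟨hk₁m, hk₁⟩⟩
  have hSne : S.Nonempty := ⟨k₂, by rw [hS, Finset.mem_filter]; exact ⟨hk₂m, hk₂⟩⟩
  set r := R.max' hRne with hr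
  set s := S.min' hSne with hs
  have hrR : r ∈ R := R.max'_mem hRne
  have hsS : s ∈ S := S.min'_mem hSne
  have hrmem : (1 ≤ r ∧ r ≤ m) ∧ y r < e := by
    simpa [hR, Finset.mem_filter, Finset.mem_Icc] using hrR
  have hsmem : (1 ≤ s ∧ s ≤ m) ∧ f ≤ y s := by
    simpa [hS, Finset.mem_filter, Finset.mem_Icc] using hsS
  obtain ⟨⟨hr1, hrm⟩, hre⟩ := hrmem
  obtain ⟨⟨hs1, hsm⟩, hsf⟩ := hsmem
  have hrs : r < s := by
    by_contra h
    push_neg at h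
    have : y s ≤ y r := hy (Set.mem_Icc.mpr ⟨hs1, hsm⟩) (Set.mem_Icc.mpr ⟨hr1, hrm⟩) h
    linarith
  have hIoo : Finset.Ioo r s ⊆ Ne' := by
    intro k hk
    rw [Finset.mem_Ioo] at hk
    have hk1 : 1 ≤ k := by omega
    have hkm : k ≤ m := by omega
    have hke : e ≤ y k := by
      by_contra h
      push_neg at h
      have : k ≤ r := R.le_max' k (by rw [hR, Finset.mem_filter, Finset.mem_Icc]; exact ⟨⟨hk1, hkm⟩, h⟩)
      omega
    have hkf : y k < f := by
      by_contra h
      push_neg at h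
      have : s ≤ k := S.min'_le k (by rw [hS, Finset.mem_filter, Finset.mem_Icc]; exact ⟨⟨hk1, hkm⟩, h⟩)
      omega
    rw [hNe', Finset.mem_filter, Finset.mem_Icc]
    exact ⟨⟨hk1, hkm⟩, Set.mem_Ico.mpr ⟨hke, hkf⟩⟩
  have hNecard : s - r - 1 ≤ Ne'.card := by
    have := Finset.card_le_card hIoo
    rwa [Nat.card_Ioo] at this
  -- the block comes before the crossing
  have hqr : q ≤ r := R.le_max' q (by
    rw [hR, Finset.mem_filter, Finset.mem_Icc]
    exact ⟨⟨hq1, hqm⟩, lt_of_lt_of_le hqd hde⟩)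
  set g : ℝ := y (r + 1) - y r with hg
  have hT1 : y s - y r ≤ ((s - r : ℕ) : ℝ) * g := by
    have := telescope y (le_of_lt hrs)
    rw [← this]
    have hle : ∀ k ∈ Finset.Ico r s, y (k + 1) - y k ≤ g := by
      intro k hk
      rw [Finset.mem_Ico] at hk
      have h1k : (1:ℕ) ≤ k := by omega
      have hkm1 : k ≤ m - 1 := by omega
      have := hΔ (Set.mem_Icc.mpr ⟨hr1, (by omega : r ≤ m - 1)⟩) (Set.mem_Icc.mpr ⟨h1k, hkm1⟩) hk.1
      simpa [hg] using this
    calc ∑ k ∈ Finset.Ico r s, (y (k + 1) - y k) ≤ ∑ _k ∈ Finset.Ico r s, g :=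
          Finset.sum_le_sum hle
      _ = ((s - r : ℕ) : ℝ) * g := by rw [Finset.sum_const, Nat.card_Ico, nsmul_eq_mul]
  have hT2 : ((q - p : ℕ) : ℝ) * g ≤ y q - y p := by
    have := telescope y hpq
    rw [← this]
    have hle : ∀ k ∈ Finset.Ico p q, g ≤ y (k + 1) - y k := by
      intro k hk
      rw [Finset.mem_Ico] at hk
      have h1k : (1:ℕ) ≤ k := by omega
      have hkm1 : k ≤ m - 1 := by omega
      have := hΔ (Set.mem_Icc.mpr ⟨h1k, hkm1⟩) (Set.mem_Icc.mpr ⟨hr1, (by omega : r ≤ m - 1)⟩) (by omega : k ≤ r)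
      simpa [hg] using this
    calc ((q - p : ℕ) : ℝ) * g = ∑ _k ∈ Finset.Ico p q, g := by
          rw [Finset.sum_const, Nat.card_Ico, nsmul_eq_mul]
      _ ≤ ∑ k ∈ Finset.Ico p q, (y (k + 1) - y k) := Finset.sum_le_sum hle
  have f1 : f - e ≤ ((s - r : ℕ) : ℝ) * g := le_trans (by linarith) hT1
  have f2 : ((q - p : ℕ) : ℝ) * g ≤ d - c := le_trans hT2 (by linarith)
  have f3 : ((s - r : ℕ) : ℝ) ≤ (Ne'.card : ℝ) + 1 := by
    have : s - r ≤ Ne'.card + 1 := by omega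
    exact_mod_cast this
  have hvF : (F.card : ℝ) - 1 = ((q - p : ℕ) : ℝ) := by
    rw [hcardF]
    push_cast [Nat.cast_sub hpq]
    ring
  rw [hvF]
  calc (f - e) * ((q - p : ℕ) : ℝ)
      ≤ (((s - r : ℕ) : ℝ) * g) * ((q - p : ℕ) : ℝ) :=
        mul_le_mul_of_nonneg_right f1 (Nat.cast_nonneg _)
    _ = ((s - r : ℕ) : ℝ) * (((q - p : ℕ) : ℝ) * g) := by ring
    _ ≤ ((s - r : ℕ) : ℝ) * (d - c) := mul_le_mul_of_nonneg_left f2 (Nat.cast_nonneg _)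
    _ = (d - c) * ((s - r : ℕ) : ℝ) := by ring
    _ ≤ (d - c) * ((Ne'.card : ℝ) + 1) := mul_le_mul_of_nonneg_left f3 (by linarith)


private lemma card_fract_decomp (m : ℕ) (y : ℕ → ℝ) (hm : 1 ≤ m)
    (hy : MonotoneOn y (Set.Icc 1 m)) (a b : ℝ) (ha : 0 ≤ a) (hb : b ≤ 1) :
    ((Finset.Icc 1 m).filter fun k => Int.fract (y k) ∈ Set.Ico a b).card
      = ∑ j ∈ Finset.Icc ⌊y 1⌋ ⌊y m⌋,
          ((Finset.Icc 1 m).filter fun k => y k ∈ Set.Ico ((j : ℝ) + a) ((j : ℝ) + b)).card := by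
  classical
  rw [← Finset.card_biUnion]
  · congr 1
    ext k
    simp only [Finset.mem_biUnion, Finset.mem_filter, Finset.mem_Icc, Set.mem_Ico]
    constructor
    · rintro ⟨hk, hfa, hfb⟩
      refine ⟨⌊y k⌋, ⟨?_, ?_⟩, hk, ?_, ?_⟩
      · exact Int.floor_le_floor (hy (Set.mem_Icc.mpr ⟨le_refl 1, hm⟩)
          (Set.mem_Icc.mpr ⟨hk.1, hk.2⟩) hk.1)
      · exact Int.floor_le_floor (hy (Set.mem_Icc.mpr ⟨hk.1, hk.2⟩)
          (Set.mem_Icc.mpr ⟨hm, le_refl m⟩) hk.2)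
      · have := Int.floor_add_fract (y k)
        linarith [hfa, this]
      · have := Int.floor_add_fract (y k)
        linarith [hfb, this]
    · rintro ⟨j, _, hk, hja, hjb⟩
      have hfloor : ⌊y k⌋ = j := by
        apply Int.floor_eq_iff.mpr
        constructor
        · linarith
        · linarith
      have := Int.floor_add_fract (y k)
      rw [hfloor] at this
      exact ⟨hk, by linarith, by linarith⟩
  · intro j _ j' _ hjj'
    simp only [Finset.disjoint_left, Finset.mem_filter, Set.mem_Ico]
    rintro k ⟨hk, hja, hjb⟩ ⟨_, hja', hjb'⟩
    have h1 : ((j:ℝ)) < (j':ℝ) + 1 := by linarith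
    have h2 : ((j':ℝ)) < (j:ℝ) + 1 := by linarith
    have : j < j' + 1 := by exact_mod_cast h1
    have : j' < j + 1 := by exact_mod_cast h2
    omega

private lemma card_reflect (m : ℕ) (y : ℕ → ℝ) (P : ℝ → Prop) [DecidablePred fun k => P (y (m + 1 - k))] [DecidablePred fun k => P (y k)] :
    ((Finset.Icc 1 m).filter fun k => P (y (m + 1 - k))).card
      = ((Finset.Icc 1 m).filter fun k => P (y k)).card := by
  apply Finset.card_bij' (fun k _ => m + 1 - k) (fun k _ => m + 1 - k)
  · intro k hk
    simp only [Finset.mem_filter, Finset.mem_Icc] at *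
    constructor
    · omega
    · have : m + 1 - (m + 1 - k) = k := by omega
      rw [this] at *
      exact hk.2
  · intro k hk
    simp only [Finset.mem_filter, Finset.mem_Icc] at *
    refine ⟨by omega, ?_⟩
    have : m + 1 - (m + 1 - k) = k := by omega
    rw [this]
    exact hk.2
  · intro k hk
    simp only [Finset.mem_filter, Finset.mem_Icc] at hk
    omega
  · intro k hk
    simp only [Finset.mem_filter, Finset.mem_Icc] at hk
    omega

private lemma sum_shift_le (good S : Finset ℤ) (g : ℤ → ℕ) (t : ℤ)
    (hsub : ∀ j ∈ good, j + t ∈ S) :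
    ∑ j ∈ good, ((g (j + t) : ℝ)) ≤ ∑ j ∈ S, (g j : ℝ) := by
  classical
  rw [← Finset.sum_image (s := good) (g := fun j => j + t) (f := fun j : ℤ => ((g j : ℝ))) (by intro x _ y _ h; exact add_left_injective t h)]
  apply Finset.sum_le_sum_of_subset_of_nonneg
  · intro j hj
    simp only [Finset.mem_image] at hj
    obtain ⟨x, hx, rfl⟩ := hj
    exact hsub x hx
  · intros
    positivity

private lemma card_le_of_subset_Ioc (s : Finset ℤ) (u v : ℤ) (C : ℝ) (hC : 0 ≤ C)
    (hs : s ⊆ Finset.Ioc u v) (h : (v : ℝ) - u ≤ C) : (s.card : ℝ) ≤ C := by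
  have h1 : s.card ≤ (Finset.Ioc u v).card := Finset.card_le_card hs
  rw [Int.card_Ioc] at h1
  rcases le_or_gt (v - u) 0 with hvu | hvu
  · have : (v - u).toNat = 0 := Int.toNat_of_nonpos hvu
    rw [this] at h1
    have : s.card = 0 := by omega
    rw [this]
    simpa using hC
  · have h2 : ((v - u).toNat : ℤ) = v - u := Int.toNat_of_nonneg (le_of_lt hvu)
    have h3 : (s.card : ℤ) ≤ v - u := by omega
    have h4 : (s.card : ℝ) ≤ (v : ℝ) - u := by exact_mod_cast h3
    linarith

private lemma sum_bad_le (bad : Finset ℤ) (f : ℤ → ℝ) (M : ℝ) (hM0 : 0 ≤ M)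
    (hcard : bad.card ≤ 2) (hf : ∀ j ∈ bad, f j ≤ M) : ∑ j ∈ bad, f j ≤ 2 * M := by
  calc ∑ j ∈ bad, f j ≤ bad.card • M := Finset.sum_le_card_nsmul _ _ _ hf
    _ = (bad.card : ℝ) * M := nsmul_eq_mul _ _
    _ ≤ 2 * M := by
        apply mul_le_mul_of_nonneg_right _ hM0
        exact_mod_cast hcard

set_option maxHeartbeats 2000000 in
private lemma count_bound (m : ℕ) (y : ℕ → ℝ) (M : ℕ) (B : ℝ) (hm : 2 ≤ m)
    (hy : MonotoneOn y (Set.Icc 1 m))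
    (hΔ : MonotoneOn (fun k => y (k + 1) - y k) (Set.Icc 1 (m - 1)) ∨
          AntitoneOn (fun k => y (k + 1) - y k) (Set.Icc 1 (m - 1)))
    (hB0 : 0 ≤ B)
    (hBub : ∀ k : ℕ, 1 ≤ k → k + 1 ≤ m → |y (k + 1) - y k| ≤ B)
    (hM : ∀ j : ℤ, ((Finset.Icc 1 m).filter fun k =>
            y k ∈ Set.Ico (j : ℝ) (j + 1)).card ≤ M)
    (a b : ℝ) (ha : 0 ≤ a) (hab : a < b) (hb : b ≤ 1) :
    |(((Finset.Icc 1 m).filter fun k => Int.fract (y k) ∈ Set.Ico a b).card : ℝ) / m - (b - a)|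
      ≤ 2 * (B + (M : ℝ) / m) := by
  classical
  have hm1 : 1 ≤ m := by omega
  set j₀ : ℤ := ⌊y 1⌋ with hj₀
  set j₁ : ℤ := ⌊y m⌋ with hj₁
  set S : Finset ℤ := Finset.Icc j₀ j₁ with hSdef
  set A : ℤ → ℕ := fun j =>
    ((Finset.Icc 1 m).filter fun k => y k ∈ Set.Ico ((j : ℝ) + a) ((j : ℝ) + b)).card with hA
  set n : ℤ → ℕ := fun j =>
    ((Finset.Icc 1 m).filter fun k => y k ∈ Set.Ico ((j : ℝ)) ((j : ℝ) + 1)).card with hn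
  have h1m : (1:ℕ) ∈ Set.Icc 1 m := Set.mem_Icc.mpr ⟨le_refl 1, hm1⟩
  have hmm : m ∈ Set.Icc 1 m := Set.mem_Icc.mpr ⟨hm1, le_refl m⟩
  have hy1m : y 1 ≤ y m := hy h1m hmm hm1
  have hj01 : j₀ ≤ j₁ := Int.floor_le_floor hy1m
  have hAdecomp : (((Finset.Icc 1 m).filter fun k =>
      Int.fract (y k) ∈ Set.Ico a b).card : ℝ) = ∑ j ∈ S, (A j : ℝ) := by
    have h0 := card_fract_decomp m y hm1 hy a b ha hb
    rw [h0]
    push_cast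
    rfl
  have hmdecomp : (m : ℝ) = ∑ j ∈ S, (n j : ℝ) := by
    have h0 := card_fract_decomp m y hm1 hy 0 1 le_rfl le_rfl
    have hful : ((Finset.Icc 1 m).filter fun k => Int.fract (y k) ∈ Set.Ico (0:ℝ) 1)
        = Finset.Icc 1 m := by
      apply Finset.filter_true_of_mem
      intro k _
      exact Set.mem_Ico.mpr ⟨Int.fract_nonneg _, Int.fract_lt_one _⟩
    rw [hful, Nat.card_Icc] at h0
    simp only [add_zero] at h0
    have h0' : m = ∑ j ∈ S, n j := by
      rw [show m = m + 1 - 1 by omega]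
      exact h0
    rw [h0']
    push_cast
    rfl
  have hnM : ∀ j : ℤ, n j ≤ M := fun j => hM j
  have hAn : ∀ j : ℤ, A j ≤ n j := by
    intro j
    apply Finset.card_le_card
    apply Finset.monotone_filter_right
    intro k _ hmem
    rw [Set.mem_Ico] at hmem ⊢
    constructor
    · linarith [hmem.1]
    · linarith [hmem.2]
  set C : ℝ := ((m - 1 : ℕ) : ℝ) * B with hC
  have hC0 : 0 ≤ C := mul_nonneg (Nat.cast_nonneg _) hB0
  have hrange : (j₁ : ℝ) - j₀ - 1 ≤ C := by
    have htel := telescope y hm1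
    have hsum : ∑ k ∈ Finset.Ico 1 m, (y (k + 1) - y k) ≤ ((m - 1 : ℕ) : ℝ) * B := by
      calc ∑ k ∈ Finset.Ico 1 m, (y (k + 1) - y k)
          ≤ ∑ _k ∈ Finset.Ico 1 m, B := by
            apply Finset.sum_le_sum
            intro k hk
            rw [Finset.mem_Ico] at hk
            exact le_trans (le_abs_self _) (hBub k hk.1 (by omega))
        _ = ((m - 1 : ℕ) : ℝ) * B := by rw [Finset.sum_const, Nat.card_Ico, nsmul_eq_mul]
    have hf1 : (j₁ : ℝ) ≤ y m := Int.floor_le _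
    have hf2 : y 1 < (j₀ : ℝ) + 1 := Int.lt_floor_add_one _
    have : y m - y 1 ≤ C := by rw [hC]; linarith [htel ▸ hsum]
    linarith
  have hCmB : C ≤ (m : ℝ) * B := by
    apply mul_le_mul_of_nonneg_right _ hB0
    have : ((m - 1 : ℕ) : ℝ) ≤ (m : ℕ) := by exact_mod_cast Nat.sub_le m 1
    exact this
  have hM0 : (0:ℝ) ≤ M := Nat.cast_nonneg _
  set ℓ : ℝ := b - a with hℓ
  have hℓ0 : 0 < ℓ := by rw [hℓ]; linarith
  have hℓ1 : ℓ ≤ 1 := by rw [hℓ]; linarith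
  -- bad-set card bounds
  have hcard2 : ∀ w : ℤ, (Finset.Icc w (w+1)).card = 2 := by
    intro w
    rw [Int.card_Icc]
    omega
  -- Upper bound
  have hupper : (∑ j ∈ S, (A j : ℝ)) ≤ ℓ * m + 2 * ((m:ℝ) * B) + 2 * M := by
    cases hΔ with
    | inl hmono =>
      rw [← Finset.sum_filter_add_sum_filter_not S (fun j => j₀ + 1 < j)]
      have hbad : (∑ j ∈ S.filter (fun j => ¬ j₀ + 1 < j), (A j : ℝ)) ≤ 2 * M := by
        apply sum_bad_le _ _ _ hM0
        · have hsub : S.filter (fun j => ¬ j₀ + 1 < j) ⊆ Finset.Icc j₀ (j₀+1) := by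
            intro j hj
            simp only [Finset.mem_filter, hSdef, Finset.mem_Icc] at hj ⊢
            omega
          have := Finset.card_le_card hsub
          rw [hcard2 j₀] at this
          exact this
        · intro j _
          exact_mod_cast le_trans (Nat.cast_le.mpr (hAn j)) (Nat.cast_le.mpr (hnM j))
      have hgood : (∑ j ∈ S.filter (fun j => j₀ + 1 < j), (A j : ℝ))
          ≤ ℓ * m + 2 * ((m:ℝ) * B) := by
        have hstep : ∀ j ∈ S.filter (fun j => j₀ + 1 < j),
            (A j : ℝ) ≤ ℓ * (n (j + (-1)) : ℝ) + 2 := by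
          intro j hj
          simp only [Finset.mem_filter, hSdef, Finset.mem_Icc] at hj
          have hblock := blockAfter m y hy hmono
            (((j + (-1) : ℤ)) : ℝ) ((((j + (-1) : ℤ)) : ℝ) + 1) ((j:ℝ) + a) ((j:ℝ) + b)
            (by linarith) (by push_cast; linarith) (by linarith)
            ⟨1, Finset.mem_Icc.mpr ⟨le_refl 1, hm1⟩, by
              have hf2 : y 1 < (j₀ : ℝ) + 1 := Int.lt_floor_add_one _
              push_cast
              have : (j₀ : ℝ) + 1 ≤ (j : ℝ) - 1 := by
                have : j₀ + 1 ≤ j - 1 := by omega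
                exact_mod_cast this
              linarith⟩
            ⟨m, Finset.mem_Icc.mpr ⟨hm1, le_refl m⟩, by
              have hf1 : (j₁ : ℝ) ≤ y m := Int.floor_le _
              push_cast
              have : (j : ℝ) ≤ (j₁ : ℝ) := by exact_mod_cast hj.1.2
              linarith⟩
          have heq : ((((j + (-1) : ℤ)) : ℝ) + 1) - (((j + (-1) : ℤ)) : ℝ) = 1 := by ring
          have heq2 : ((j:ℝ) + b) - ((j:ℝ) + a) = ℓ := by rw [hℓ]; ring
          rw [heq, heq2] at hblock
      -- hblock : 1 * (A j - 1) ≤ ℓ * (cnt + 1) where cnt is n (j + (-1))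
          have hcnt : (((Finset.Icc 1 m).filter fun k =>
              y k ∈ Set.Ico (((j + (-1) : ℤ)) : ℝ) ((((j + (-1) : ℤ)) : ℝ) + 1)).card : ℝ)
              = (n (j + (-1)) : ℝ) := by rw [hn]
          rw [hcnt] at hblock
          have hAj : (((Finset.Icc 1 m).filter fun k =>
              y k ∈ Set.Ico ((j:ℝ) + a) ((j:ℝ) + b)).card : ℝ) = (A j : ℝ) := by rw [hA]
          rw [hAj] at hblock
          nlinarith [hℓ1, hℓ0]
        calc (∑ j ∈ S.filter (fun j => j₀ + 1 < j), (A j : ℝ))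
            ≤ (∑ j ∈ S.filter (fun j => j₀ + 1 < j), (ℓ * (n (j + (-1)) : ℝ) + 2)) :=
              Finset.sum_le_sum hstep
          _ = ℓ * (∑ j ∈ S.filter (fun j => j₀ + 1 < j), (n (j + (-1)) : ℝ))
              + 2 * (S.filter (fun j => j₀ + 1 < j)).card := by
              rw [Finset.sum_add_distrib, ← Finset.mul_sum, Finset.sum_const, nsmul_eq_mul]
              ring
          _ ≤ ℓ * (m : ℝ) + 2 * C := by
              have hs1 : (∑ j ∈ S.filter (fun j => j₀ + 1 < j), (n (j + (-1)) : ℝ))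
                  ≤ ∑ j ∈ S, (n j : ℝ) := by
                apply sum_shift_le
                intro j hj
                simp only [Finset.mem_filter, hSdef, Finset.mem_Icc] at hj ⊢
                omega
              rw [← hmdecomp] at hs1
              have hs2 : ((S.filter (fun j => j₀ + 1 < j)).card : ℝ) ≤ C := by
                apply card_le_of_subset_Ioc _ (j₀ + 1) j₁ _ hC0
                · intro j hj
                  simp only [Finset.mem_filter, hSdef, Finset.mem_Icc, Finset.mem_Ioc] at hj ⊢
                  omega
                · push_cast
                  linarith
              have hsum_nonneg : (0:ℝ) ≤ ∑ j ∈ S.filter (fun j => j₀ + 1 < j), (n (j + (-1)) : ℝ) := by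
                apply Finset.sum_nonneg
                intros
                positivity
              nlinarith [hℓ0, hℓ1]
          _ ≤ ℓ * m + 2 * ((m:ℝ) * B) := by linarith
      linarith
    | inr hanti =>
      rw [← Finset.sum_filter_add_sum_filter_not S (fun j => j < j₁ - 1)]
      have hbad : (∑ j ∈ S.filter (fun j => ¬ j < j₁ - 1), (A j : ℝ)) ≤ 2 * M := by
        apply sum_bad_le _ _ _ hM0
        · have hsub : S.filter (fun j => ¬ j < j₁ - 1) ⊆ Finset.Icc (j₁-1) ((j₁-1)+1) := by
            intro j hj
            simp only [Finset.mem_filter, hSdef, Finset.mem_Icc] at hj ⊢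
            omega
          have := Finset.card_le_card hsub
          rw [hcard2 (j₁-1)] at this
          exact this
        · intro j _
          exact_mod_cast le_trans (Nat.cast_le.mpr (hAn j)) (Nat.cast_le.mpr (hnM j))
      have hgood : (∑ j ∈ S.filter (fun j => j < j₁ - 1), (A j : ℝ))
          ≤ ℓ * m + 2 * ((m:ℝ) * B) := by
        have hstep : ∀ j ∈ S.filter (fun j => j < j₁ - 1),
            (A j : ℝ) ≤ ℓ * (n (j + 1) : ℝ) + 2 := by
          intro j hj
          simp only [Finset.mem_filter, hSdef, Finset.mem_Icc] at hj
          have hblock := blockBefore m y hy hanti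
            (((j + 1 : ℤ)) : ℝ) ((((j + 1 : ℤ)) : ℝ) + 1) ((j:ℝ) + a) ((j:ℝ) + b)
            (by linarith) (by push_cast; linarith) (by linarith)
            ⟨1, Finset.mem_Icc.mpr ⟨le_refl 1, hm1⟩, by
              have hf2 : y 1 < (j₀ : ℝ) + 1 := Int.lt_floor_add_one _
              push_cast
              have : (j₀ : ℝ) ≤ (j : ℝ) := by exact_mod_cast hj.1.1
              linarith⟩
            ⟨m, Finset.mem_Icc.mpr ⟨hm1, le_refl m⟩, by
              have hf1 : (j₁ : ℝ) ≤ y m := Int.floor_le _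
              push_cast
              have : (j : ℝ) + 2 ≤ (j₁ : ℝ) := by
                have : j + 2 ≤ j₁ := by omega
                exact_mod_cast this
              linarith⟩
          have heq : ((((j + 1 : ℤ)) : ℝ) + 1) - (((j + 1 : ℤ)) : ℝ) = 1 := by ring
          have heq2 : ((j:ℝ) + b) - ((j:ℝ) + a) = ℓ := by rw [hℓ]; ring
          rw [heq, heq2] at hblock
          have hcnt : (((Finset.Icc 1 m).filter fun k =>
              y k ∈ Set.Ico (((j + 1 : ℤ)) : ℝ) ((((j + 1 : ℤ)) : ℝ) + 1)).card : ℝ)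
              = (n (j + 1) : ℝ) := by rw [hn]
          rw [hcnt] at hblock
          have hAj : (((Finset.Icc 1 m).filter fun k =>
              y k ∈ Set.Ico ((j:ℝ) + a) ((j:ℝ) + b)).card : ℝ) = (A j : ℝ) := by rw [hA]
          rw [hAj] at hblock
          nlinarith [hℓ1, hℓ0]
        calc (∑ j ∈ S.filter (fun j => j < j₁ - 1), (A j : ℝ))
            ≤ (∑ j ∈ S.filter (fun j => j < j₁ - 1), (ℓ * (n (j + 1) : ℝ) + 2)) :=
              Finset.sum_le_sum hstep
          _ = ℓ * (∑ j ∈ S.filter (fun j => j < j₁ - 1), (n (j + 1) : ℝ))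
              + 2 * (S.filter (fun j => j < j₁ - 1)).card := by
              rw [Finset.sum_add_distrib, ← Finset.mul_sum, Finset.sum_const, nsmul_eq_mul]
              ring
          _ ≤ ℓ * (m : ℝ) + 2 * C := by
              have hs1 : (∑ j ∈ S.filter (fun j => j < j₁ - 1), (n (j + 1) : ℝ))
                  ≤ ∑ j ∈ S, (n j : ℝ) := by
                apply sum_shift_le
                intro j hj
                simp only [Finset.mem_filter, hSdef, Finset.mem_Icc] at hj ⊢
                omega
              rw [← hmdecomp] at hs1
              have hs2 : ((S.filter (fun j => j < j₁ - 1)).card : ℝ) ≤ C := by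
                apply card_le_of_subset_Ioc _ (j₀ - 1) (j₁ - 2) _ hC0
                · intro j hj
                  simp only [Finset.mem_filter, hSdef, Finset.mem_Icc, Finset.mem_Ioc] at hj ⊢
                  omega
                · push_cast
                  linarith
              have hsum_nonneg : (0:ℝ) ≤ ∑ j ∈ S.filter (fun j => j < j₁ - 1), (n (j + 1) : ℝ) := by
                apply Finset.sum_nonneg
                intros
                positivity
              nlinarith [hℓ0, hℓ1]
          _ ≤ ℓ * m + 2 * ((m:ℝ) * B) := by linarith
      linarith
  -- Lower bound
  have hlower : ℓ * (m : ℝ) ≤ (∑ j ∈ S, (A j : ℝ)) + 2 * ((m:ℝ) * B) + 2 * M := by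
    have hAtot_nonneg : (0:ℝ) ≤ ∑ j ∈ S, (A j : ℝ) := by
      apply Finset.sum_nonneg; intros; positivity
    have hrw : ℓ * (m : ℝ) = ∑ j ∈ S, (ℓ * (n j : ℝ)) := by
      rw [hmdecomp, Finset.mul_sum]
    rw [hrw]
    cases hΔ with
    | inl hmono =>
      rw [← Finset.sum_filter_add_sum_filter_not S (fun j => j₀ + 1 < j)]
      have hbad : (∑ j ∈ S.filter (fun j => ¬ j₀ + 1 < j), (ℓ * (n j : ℝ))) ≤ 2 * M := by
        apply sum_bad_le _ _ _ hM0
        · have hsub : S.filter (fun j => ¬ j₀ + 1 < j) ⊆ Finset.Icc j₀ (j₀+1) := by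
            intro j hj
            simp only [Finset.mem_filter, hSdef, Finset.mem_Icc] at hj ⊢
            omega
          have := Finset.card_le_card hsub
          rw [hcard2 j₀] at this
          exact this
        · intro j _
          have h1 : (n j : ℝ) ≤ M := Nat.cast_le.mpr (hnM j)
          nlinarith [Nat.cast_nonneg (α := ℝ) (n j), hℓ1, hℓ0]
      have hgood : (∑ j ∈ S.filter (fun j => j₀ + 1 < j), (ℓ * (n j : ℝ)))
          ≤ (∑ j ∈ S, (A j : ℝ)) + 2 * ((m:ℝ) * B) := by
        have hstep : ∀ j ∈ S.filter (fun j => j₀ + 1 < j),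
            ℓ * (n j : ℝ) ≤ (A (j + (-1)) : ℝ) + 2 := by
          intro j hj
          simp only [Finset.mem_filter, hSdef, Finset.mem_Icc] at hj
          have hblock := blockAfter m y hy hmono
            ((((j + (-1) : ℤ)) : ℝ) + a) ((((j + (-1) : ℤ)) : ℝ) + b) ((j:ℝ)) ((j:ℝ) + 1)
            (by linarith) (by push_cast; linarith) (by linarith)
            ⟨1, Finset.mem_Icc.mpr ⟨le_refl 1, hm1⟩, by
              have hf2 : y 1 < (j₀ : ℝ) + 1 := Int.lt_floor_add_one _
              push_cast
              have : (j₀ : ℝ) + 1 ≤ (j : ℝ) - 1 := by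
                have : j₀ + 1 ≤ j - 1 := by omega
                exact_mod_cast this
              linarith⟩
            ⟨m, Finset.mem_Icc.mpr ⟨hm1, le_refl m⟩, by
              have hf1 : (j₁ : ℝ) ≤ y m := Int.floor_le _
              push_cast
              have : (j : ℝ) ≤ (j₁ : ℝ) := by exact_mod_cast hj.1.2
              linarith⟩
          have heq : ((((j + (-1) : ℤ)) : ℝ) + b) - ((((j + (-1) : ℤ)) : ℝ) + a) = ℓ := by
            rw [hℓ]; ring
          have heq2 : ((j:ℝ) + 1) - ((j:ℝ)) = 1 := by ring
          rw [heq, heq2] at hblock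
          have hcnt : (((Finset.Icc 1 m).filter fun k =>
              y k ∈ Set.Ico ((j:ℝ)) ((j:ℝ) + 1)).card : ℝ) = (n j : ℝ) := by rw [hn]
          rw [hcnt] at hblock
          have hAj : (((Finset.Icc 1 m).filter fun k =>
              y k ∈ Set.Ico ((((j + (-1) : ℤ)) : ℝ) + a) ((((j + (-1) : ℤ)) : ℝ) + b)).card : ℝ)
              = (A (j + (-1)) : ℝ) := by rw [hA]
          rw [hAj] at hblock
          nlinarith [hℓ1, hℓ0]
        calc (∑ j ∈ S.filter (fun j => j₀ + 1 < j), (ℓ * (n j : ℝ)))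
            ≤ (∑ j ∈ S.filter (fun j => j₀ + 1 < j), ((A (j + (-1)) : ℝ) + 2)) :=
              Finset.sum_le_sum hstep
          _ = (∑ j ∈ S.filter (fun j => j₀ + 1 < j), (A (j + (-1)) : ℝ))
              + 2 * (S.filter (fun j => j₀ + 1 < j)).card := by
              rw [Finset.sum_add_distrib, Finset.sum_const, nsmul_eq_mul]
              ring
          _ ≤ (∑ j ∈ S, (A j : ℝ)) + 2 * ((m:ℝ) * B) := by
              have hs1 : (∑ j ∈ S.filter (fun j => j₀ + 1 < j), (A (j + (-1)) : ℝ))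
                  ≤ ∑ j ∈ S, (A j : ℝ) := by
                apply sum_shift_le
                intro j hj
                simp only [Finset.mem_filter, hSdef, Finset.mem_Icc] at hj ⊢
                omega
              have hs2 : ((S.filter (fun j => j₀ + 1 < j)).card : ℝ) ≤ C := by
                apply card_le_of_subset_Ioc _ (j₀ + 1) j₁ _ hC0
                · intro j hj
                  simp only [Finset.mem_filter, hSdef, Finset.mem_Icc, Finset.mem_Ioc] at hj ⊢
                  omega
                · push_cast
                  linarith
              linarith
      linarith
    | inr hanti =>
      rw [← Finset.sum_filter_add_sum_filter_not S (fun j => j < j₁ - 1)]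
      have hbad : (∑ j ∈ S.filter (fun j => ¬ j < j₁ - 1), (ℓ * (n j : ℝ))) ≤ 2 * M := by
        apply sum_bad_le _ _ _ hM0
        · have hsub : S.filter (fun j => ¬ j < j₁ - 1) ⊆ Finset.Icc (j₁-1) ((j₁-1)+1) := by
            intro j hj
            simp only [Finset.mem_filter, hSdef, Finset.mem_Icc] at hj ⊢
            omega
          have := Finset.card_le_card hsub
          rw [hcard2 (j₁-1)] at this
          exact this
        · intro j _
          have h1 : (n j : ℝ) ≤ M := Nat.cast_le.mpr (hnM j)
          nlinarith [Nat.cast_nonneg (α := ℝ) (n j), hℓ1, hℓ0]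
      have hgood : (∑ j ∈ S.filter (fun j => j < j₁ - 1), (ℓ * (n j : ℝ)))
          ≤ (∑ j ∈ S, (A j : ℝ)) + 2 * ((m:ℝ) * B) := by
        have hstep : ∀ j ∈ S.filter (fun j => j < j₁ - 1),
            ℓ * (n j : ℝ) ≤ (A (j + 1) : ℝ) + 2 := by
          intro j hj
          simp only [Finset.mem_filter, hSdef, Finset.mem_Icc] at hj
          have hblock := blockBefore m y hy hanti
            ((((j + 1 : ℤ)) : ℝ) + a) ((((j + 1 : ℤ)) : ℝ) + b) ((j:ℝ)) ((j:ℝ) + 1)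
            (by linarith) (by push_cast; linarith) (by linarith)
            ⟨1, Finset.mem_Icc.mpr ⟨le_refl 1, hm1⟩, by
              have hf2 : y 1 < (j₀ : ℝ) + 1 := Int.lt_floor_add_one _
              push_cast
              have : (j₀ : ℝ) ≤ (j : ℝ) := by exact_mod_cast hj.1.1
              linarith⟩
            ⟨m, Finset.mem_Icc.mpr ⟨hm1, le_refl m⟩, by
              have hf1 : (j₁ : ℝ) ≤ y m := Int.floor_le _
              push_cast
              have : (j : ℝ) + 2 ≤ (j₁ : ℝ) := by
                have : j + 2 ≤ j₁ := by omega
                exact_mod_cast this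
              linarith⟩
          have heq : ((((j + 1 : ℤ)) : ℝ) + b) - ((((j + 1 : ℤ)) : ℝ) + a) = ℓ := by
            rw [hℓ]; ring
          have heq2 : ((j:ℝ) + 1) - ((j:ℝ)) = 1 := by ring
          rw [heq, heq2] at hblock
          have hcnt : (((Finset.Icc 1 m).filter fun k =>
              y k ∈ Set.Ico ((j:ℝ)) ((j:ℝ) + 1)).card : ℝ) = (n j : ℝ) := by rw [hn]
          rw [hcnt] at hblock
          have hAj : (((Finset.Icc 1 m).filter fun k =>
              y k ∈ Set.Ico ((((j + 1 : ℤ)) : ℝ) + a) ((((j + 1 : ℤ)) : ℝ) + b)).card : ℝ)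
              = (A (j + 1) : ℝ) := by rw [hA]
          rw [hAj] at hblock
          nlinarith [hℓ1, hℓ0]
        calc (∑ j ∈ S.filter (fun j => j < j₁ - 1), (ℓ * (n j : ℝ)))
            ≤ (∑ j ∈ S.filter (fun j => j < j₁ - 1), ((A (j + 1) : ℝ) + 2)) :=
              Finset.sum_le_sum hstep
          _ = (∑ j ∈ S.filter (fun j => j < j₁ - 1), (A (j + 1) : ℝ))
              + 2 * (S.filter (fun j => j < j₁ - 1)).card := by
              rw [Finset.sum_add_distrib, Finset.sum_const, nsmul_eq_mul]
              ring
          _ ≤ (∑ j ∈ S, (A j : ℝ)) + 2 * ((m:ℝ) * B) := by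
              have hs1 : (∑ j ∈ S.filter (fun j => j < j₁ - 1), (A (j + 1) : ℝ))
                  ≤ ∑ j ∈ S, (A j : ℝ) := by
                apply sum_shift_le
                intro j hj
                simp only [Finset.mem_filter, hSdef, Finset.mem_Icc] at hj ⊢
                omega
              have hs2 : ((S.filter (fun j => j < j₁ - 1)).card : ℝ) ≤ C := by
                apply card_le_of_subset_Ioc _ (j₀ - 1) (j₁ - 2) _ hC0
                · intro j hj
                  simp only [Finset.mem_filter, hSdef, Finset.mem_Icc, Finset.mem_Ioc] at hj ⊢
                  omega
                · push_cast
                  linarith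
              linarith
      linarith
  -- conclude
  have hm0 : (0:ℝ) < m := by
    have : (2:ℝ) ≤ m := by exact_mod_cast hm
    linarith
  rw [hAdecomp]
  set X : ℝ := ∑ j ∈ S, (A j : ℝ) with hX
  have hXu : X / m - ℓ ≤ 2 * (B + (M:ℝ)/m) := by
    rw [sub_le_iff_le_add, div_le_iff₀ hm0]
    calc X ≤ ℓ * m + 2*((m:ℝ)*B) + 2*M := hupper
      _ = (2 * (B + (M:ℝ)/m) + ℓ) * m := by field_simp; ring
  have hXl : ℓ - X / m ≤ 2 * (B + (M:ℝ)/m) := by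
    have h2 : ℓ * m ≤ (2 * (B + (M:ℝ)/m)) * m + X := by
      have hexp : (2 * (B + (M:ℝ)/m)) * m = 2*((m:ℝ)*B) + 2*M := by field_simp
      rw [hexp]
      linarith [hlower]
    have h3 : ℓ ≤ 2 * (B + (M:ℝ)/m) + X/m := by
      rw [← mul_le_mul_iff_of_pos_right hm0]
      have hexp : (2*(B+(M:ℝ)/m) + X/m) * m = (2*(B+(M:ℝ)/m))*m + X := by field_simp
      rw [hexp]
      exact h2
    linarith
  rw [abs_le]
  constructor
  · linarith
  · linarith


open scoped Classical in
/-- Discrepancy of the finite sequence `(y k)` for `k` in the index set `s`. -/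
noncomputable def disc (s : Finset ℕ) (y : ℕ → ℝ) : ℝ :=
  ⨆ p : {p : ℝ × ℝ // 0 ≤ p.1 ∧ p.1 < p.2 ∧ p.2 ≤ 1},
    |((s.filter fun k => Int.fract (y k) ∈ Set.Ico p.1.1 p.1.2).card : ℝ) / s.card
      - (p.1.2 - p.1.1)|

/-- Remark after Lemma 5: discrepancy bound via the maximal first difference
and the maximal number of points in a unit interval. -/
theorem disc_le_of_max_diff (m : ℕ) (y : ℕ → ℝ) (M : ℕ) (B : ℝ) (hm : 2 ≤ m)
    (hy : MonotoneOn y (Set.Icc 1 m) ∨ AntitoneOn y (Set.Icc 1 m))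
    (hΔ : MonotoneOn (fun k => y (k + 1) - y k) (Set.Icc 1 (m - 1)) ∨
          AntitoneOn (fun k => y (k + 1) - y k) (Set.Icc 1 (m - 1)))
    (hB : IsGreatest {r : ℝ | ∃ k : ℕ, 1 ≤ k ∧ k + 1 ≤ m ∧ r = |y (k + 1) - y k|} B)
    (hM : ∀ j : ℤ, ((Finset.Icc 1 m).filter fun k =>
            y k ∈ Set.Ico (j : ℝ) (j + 1)).card ≤ M)
    (hM' : ∃ j : ℤ, ((Finset.Icc 1 m).filter fun k =>
            y k ∈ Set.Ico (j : ℝ) (j + 1)).card = M) :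
    disc (Finset.Icc 1 m) y ≤ 2 * (B + (M : ℝ) / m) := by
  classical
  obtain ⟨⟨k₀, hk₀1, hk₀m, hk₀e⟩, hBub'⟩ := hB
  have hB0 : 0 ≤ B := hk₀e ▸ abs_nonneg _
  have hBub : ∀ k : ℕ, 1 ≤ k → k + 1 ≤ m → |y (k + 1) - y k| ≤ B := by
    intro k h1 h2
    exact hBub' ⟨k, h1, h2, rfl⟩
  have key : ∀ a b : ℝ, 0 ≤ a → a < b → b ≤ 1 →
      |(((Finset.Icc 1 m).filter fun k => Int.fract (y k) ∈ Set.Ico a b).card : ℝ) / m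
        - (b - a)| ≤ 2 * (B + (M : ℝ) / m) := by
    intro a b ha hab hb
    cases hy with
    | inl hmono => exact count_bound m y M B hm hmono hΔ hB0 hBub hM a b ha hab hb
    | inr hanti =>
      set z : ℕ → ℝ := fun k => y (m + 1 - k) with hz
      have hzy : MonotoneOn z (Set.Icc 1 m) := by
        intro k hk k' hk' hkk'
        simp only [Set.mem_Icc] at hk hk'
        exact hanti (Set.mem_Icc.mpr ⟨by omega, by omega⟩)
          (Set.mem_Icc.mpr ⟨by omega, by omega⟩) (by omega)
      have hzd : ∀ k, 1 ≤ k → k + 1 ≤ m →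
          z (k + 1) - z k = -(y ((m - k) + 1) - y (m - k)) := by
        intro k h1 h2
        simp only [hz]
        have e1 : m + 1 - (k + 1) = m - k := by omega
        have e2 : m + 1 - k = (m - k) + 1 := by omega
        rw [e1, e2]
        ring
      have hΔz : MonotoneOn (fun k => z (k + 1) - z k) (Set.Icc 1 (m - 1)) ∨
                 AntitoneOn (fun k => z (k + 1) - z k) (Set.Icc 1 (m - 1)) := by
        cases hΔ with
        | inl h =>
          left
          intro k hk k' hk' hkk'
          simp only [Set.mem_Icc] at hk hk'
          show z (k + 1) - z k ≤ z (k' + 1) - z k'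
          rw [hzd k hk.1 (by omega), hzd k' hk'.1 (by omega)]
          have := h (Set.mem_Icc.mpr ⟨(by omega : 1 ≤ m - k'), by omega⟩)
                    (Set.mem_Icc.mpr ⟨(by omega : 1 ≤ m - k), by omega⟩) (by omega)
          simp only at this
          linarith
        | inr h =>
          right
          intro k hk k' hk' hkk'
          simp only [Set.mem_Icc] at hk hk'
          show z (k' + 1) - z k' ≤ z (k + 1) - z k
          rw [hzd k hk.1 (by omega), hzd k' hk'.1 (by omega)]
          have := h (Set.mem_Icc.mpr ⟨(by omega : 1 ≤ m - k'), by omega⟩)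
                    (Set.mem_Icc.mpr ⟨(by omega : 1 ≤ m - k), by omega⟩) (by omega)
          simp only at this
          linarith
      have hBz : ∀ k : ℕ, 1 ≤ k → k + 1 ≤ m → |z (k + 1) - z k| ≤ B := by
        intro k h1 h2
        rw [hzd k h1 h2, abs_neg]
        exact hBub (m - k) (by omega) (by omega)
      have hMz : ∀ j : ℤ, ((Finset.Icc 1 m).filter fun k =>
          z k ∈ Set.Ico (j : ℝ) (j + 1)).card ≤ M := by
        intro j
        have heq : ((Finset.Icc 1 m).filter fun k =>
            z k ∈ Set.Ico (j : ℝ) (j + 1)).card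
            = ((Finset.Icc 1 m).filter fun k =>
            y k ∈ Set.Ico (j : ℝ) (j + 1)).card := by
          simp only [hz]
          exact card_reflect m y (fun x => x ∈ Set.Ico (j : ℝ) ((j:ℝ) + 1))
        rw [heq]
        exact hM j
      have hres := count_bound m z M B hm hzy hΔz hB0 hBz hMz a b ha hab hb
      have heq : ((Finset.Icc 1 m).filter fun k =>
          Int.fract (z k) ∈ Set.Ico a b).card
          = ((Finset.Icc 1 m).filter fun k => Int.fract (y k) ∈ Set.Ico a b).card := by
        simp only [hz]
        exact card_reflect m y (fun x => Int.fract x ∈ Set.Ico a b)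
      rwa [heq] at hres
  have hcard : (Finset.Icc 1 m).card = m := by rw [Nat.card_Icc]; omega
  haveI : Nonempty {p : ℝ × ℝ // 0 ≤ p.1 ∧ p.1 < p.2 ∧ p.2 ≤ 1} :=
    ⟨⟨(0, 1), by norm_num⟩⟩
  rw [disc]
  apply ciSup_le
  rintro ⟨⟨a, b⟩, ha, hab, hb⟩
  simp only [Finset.filter_congr_decidable, hcard]
  exact key a b ha hab hb
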